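/- The pullback of the Euclidean metric on ℝ³ by the map X(ψ,φ,x₃) = (1/(cosh x₃ + cos ψ)) (sin ψ cos φ, sin ψ sin φ, sinh x₃) is (cosh x₃ + cos ψ)^{-2} (dψ² + sin²ψ dφ² + dx₃²). -/

import Mathlib

/-- The parametrization X(ψ,φ,x₃) of the unit ball. -/
noncomputable def Xmap (ψ φ x3 : ℝ) : ℝ × ℝ × ℝ :=
  (1 / (Real.cosh x3 + Real.cos ψ)) •
    ((Real.sin ψ * Real.cos φ, Real.sin ψ * Real.sin φ, Real.sinh x3) : ℝ × ℝ × ℝ)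

/-- Euclidean dot product on ℝ³. -/
def dot3 (p q : ℝ × ℝ × ℝ) : ℝ := p.1 * q.1 + p.2.1 * q.2.1 + p.2.2 * q.2.2

/-- The pullback of the Euclidean metric by X is
(cosh x₃ + cos ψ)⁻²(dψ² + sin²ψ dφ² + dx₃²), expressed componentwise. -/
theorem stmt_8 (ψ φ x3 : ℝ) (hψ : ψ ∈ Set.Ioo 0 (Real.pi/2)) :
    dot3 (deriv (fun t => Xmap t φ x3) ψ) (deriv (fun t => Xmap t φ x3) ψ)
        = ((Real.cosh x3 + Real.cos ψ)⁻¹)^2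
    ∧ dot3 (deriv (fun t => Xmap ψ t x3) φ) (deriv (fun t => Xmap ψ t x3) φ)
        = ((Real.cosh x3 + Real.cos ψ)⁻¹)^2 * (Real.sin ψ)^2
    ∧ dot3 (deriv (fun t => Xmap ψ φ t) x3) (deriv (fun t => Xmap ψ φ t) x3)
        = ((Real.cosh x3 + Real.cos ψ)⁻¹)^2
    ∧ dot3 (deriv (fun t => Xmap t φ x3) ψ) (deriv (fun t => Xmap ψ t x3) φ) = 0
    ∧ dot3 (deriv (fun t => Xmap t φ x3) ψ) (deriv (fun t => Xmap ψ φ t) x3) = 0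
    ∧ dot3 (deriv (fun t => Xmap ψ t x3) φ) (deriv (fun t => Xmap ψ φ t) x3) = 0 := by
  obtain ⟨hψ0, hψ1⟩ := hψ
  have hcos : 0 < Real.cos ψ :=
    Real.cos_pos_of_mem_Ioo ⟨by linarith [Real.pi_pos], hψ1⟩
  set D : ℝ := Real.cosh x3 + Real.cos ψ with hDdef
  have hD : 0 < D := by have := Real.one_le_cosh x3; dsimp [D]; linarith
  have hDne : D ≠ 0 := ne_of_gt hD
  -- ψ-derivative
  have hdenψ : HasDerivAt (fun t => Real.cosh x3 + Real.cos t) (-Real.sin ψ) ψ :=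
    (Real.hasDerivAt_cos ψ).const_add _
  have hgψ : HasDerivAt (fun t => 1 / (Real.cosh x3 + Real.cos t))
      ((0 * D - 1 * (-Real.sin ψ)) / D ^ 2) ψ :=
    (hasDerivAt_const ψ 1).div hdenψ hDne
  have hXψ : HasDerivAt (fun t => Xmap t φ x3)
      ((Real.sin ψ ^ 2 + Real.cos ψ * D) * Real.cos φ / D ^ 2,
       (Real.sin ψ ^ 2 + Real.cos ψ * D) * Real.sin φ / D ^ 2,
       Real.sin ψ * Real.sinh x3 / D ^ 2) ψ := by
    have h1 := hgψ.mul ((Real.hasDerivAt_sin ψ).mul_const (Real.cos φ))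
    have h2 := hgψ.mul ((Real.hasDerivAt_sin ψ).mul_const (Real.sin φ))
    have h3 := hgψ.mul (hasDerivAt_const ψ (Real.sinh x3))
    have hfun : (fun t => Xmap t φ x3) =
        (fun t => (1 / (Real.cosh x3 + Real.cos t) * (Real.sin t * Real.cos φ),
          1 / (Real.cosh x3 + Real.cos t) * (Real.sin t * Real.sin φ),
          1 / (Real.cosh x3 + Real.cos t) * Real.sinh x3)) :=
      funext fun t => by simp [Xmap, Prod.smul_mk, smul_eq_mul]
    rw [hfun]
    convert h1.prodMk (h2.prodMk h3) using 1
    · rfl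
    rw [Prod.mk.injEq, Prod.mk.injEq]
    refine ⟨?_, ?_, ?_⟩ <;> first
      | (field_simp; ring) | field_simp | ring | rfl
  -- φ-derivative
  have hXφ : HasDerivAt (fun t => Xmap ψ t x3)
      (-(Real.sin ψ * Real.sin φ) / D,
       Real.sin ψ * Real.cos φ / D,
       (0:ℝ)) φ := by
    have h1 := ((Real.hasDerivAt_cos φ).const_mul (Real.sin ψ)).const_mul (1/D)
    have h2 := ((Real.hasDerivAt_sin φ).const_mul (Real.sin ψ)).const_mul (1/D)
    have h3 : HasDerivAt (fun _ : ℝ => 1 / D * Real.sinh x3) 0 φ := hasDerivAt_const _ _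
    have hfun : (fun t => Xmap ψ t x3) =
        (fun t => (1 / D * (Real.sin ψ * Real.cos t),
          1 / D * (Real.sin ψ * Real.sin t),
          1 / D * Real.sinh x3)) :=
      funext fun t => by simp [Xmap, Prod.smul_mk, smul_eq_mul, hDdef]
    rw [hfun]
    convert h1.prodMk (h2.prodMk h3) using 1
    rw [Prod.mk.injEq, Prod.mk.injEq]
    refine ⟨?_, ?_, ?_⟩ <;> first
      | (field_simp; ring) | field_simp | ring | rfl
  -- x3-derivative
  have hdenx : HasDerivAt (fun t => Real.cosh t + Real.cos ψ) (Real.sinh x3) x3 :=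
    (Real.hasDerivAt_cosh x3).add_const _
  have hgx : HasDerivAt (fun t => 1 / (Real.cosh t + Real.cos ψ))
      ((0 * D - 1 * Real.sinh x3) / D ^ 2) x3 :=
    (hasDerivAt_const x3 1).div hdenx hDne
  have hXx : HasDerivAt (fun t => Xmap ψ φ t)
      (-(Real.sinh x3 * Real.sin ψ * Real.cos φ) / D ^ 2,
       -(Real.sinh x3 * Real.sin ψ * Real.sin φ) / D ^ 2,
       (Real.cosh x3 * D - Real.sinh x3 ^ 2) / D ^ 2) x3 := by
    have h1 := hgx.mul_const (Real.sin ψ * Real.cos φ)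
    have h2 := hgx.mul_const (Real.sin ψ * Real.sin φ)
    have h3 := hgx.mul (Real.hasDerivAt_sinh x3)
    have hfun : (fun t => Xmap ψ φ t) =
        (fun t => (1 / (Real.cosh t + Real.cos ψ) * (Real.sin ψ * Real.cos φ),
          1 / (Real.cosh t + Real.cos ψ) * (Real.sin ψ * Real.sin φ),
          1 / (Real.cosh t + Real.cos ψ) * Real.sinh t)) :=
      funext fun t => by simp [Xmap, Prod.smul_mk, smul_eq_mul]
    rw [hfun]
    convert h1.prodMk (h2.prodMk h3) using 1
    · rfl
    rw [Prod.mk.injEq, Prod.mk.injEq]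
    refine ⟨?_, ?_, ?_⟩ <;> first
      | (field_simp; ring) | field_simp | ring | rfl
  rw [hXψ.deriv, hXφ.deriv, hXx.deriv]
  have hs : Real.sin ψ ^ 2 = 1 - Real.cos ψ ^ 2 := by
    have := Real.sin_sq_add_cos_sq ψ; linarith
  have hsh : Real.sinh x3 ^ 2 = Real.cosh x3 ^ 2 - 1 := by
    have := Real.cosh_sq_sub_sinh_sq x3; linarith
  have hφ := Real.sin_sq_add_cos_sq φ
  refine ⟨?_, ?_, ?_, ?_, ?_, ?_⟩ <;> simp only [dot3] <;> field_simp <;> (try rw [hDdef])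
  · linear_combination
      ((Real.sin ψ ^ 2 + Real.cos ψ * (Real.cosh x3 + Real.cos ψ)) ^ 2) * hφ
      + (Real.sin ψ ^ 2 + 1 - Real.cos ψ ^ 2
          + 2 * Real.cos ψ * (Real.cosh x3 + Real.cos ψ) + Real.sinh x3 ^ 2) * hs
      + (1 - Real.cos ψ ^ 2) * hsh
  · linear_combination (Real.sin ψ ^ 2) * hφ
  · linear_combination (Real.sinh x3 ^ 2 * Real.sin ψ ^ 2) * hφ
      + Real.sinh x3 ^ 2 * hs
      + (Real.sinh x3 ^ 2 + Real.cosh x3 ^ 2 - Real.cos ψ ^ 2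
          - 2 * Real.cosh x3 * (Real.cosh x3 + Real.cos ψ)) * hsh
  · ring
  · linear_combination
      ((-(Real.sinh x3 * Real.sin ψ
          * (Real.sin ψ ^ 2 + Real.cos ψ * (Real.cosh x3 + Real.cos ψ))))) * hφ
      + ((-(Real.sin ψ * Real.sinh x3))) * hs
      + ((-(Real.sin ψ * Real.sinh x3))) * hsh
  · ring
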